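/- Let c > 0 and ω₀ ∈ (0, π). Suppose ω : [0,∞) → ℝ is differentiable with ω(0) = ω₀ and ω′(t) ≤ −c·sin(ω(t)) for all t ≥ 0. Then for all t ≥ 0, ω(t) ≤ π − 2·arctan( (cos(ω₀/2)/sin(ω₀/2)) · e^{c·t} ). (ODE comparison with the explicit solution of γ′ = −c·sin γ, γ(0) = ω₀, namely γ(t) = π − 2·arctan(cot(ω₀/2)·e^{c·t}) = 2·arccot(cot(ω₀/2)·e^{c·t}).) -/

import Mathlib

open Real Filter

lemma sin_lip (a b : ℝ) : Real.sin a - Real.sin b ≤ |a - b| := by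
  calc Real.sin a - Real.sin b ≤ |Real.sin a - Real.sin b| := le_abs_self _
  _ = |2 * Real.sin ((a - b) / 2) * Real.cos ((a + b) / 2)| := by rw [Real.sin_sub_sin]
  _ ≤ 2 * |(a - b) / 2| * 1 := by
      rw [abs_mul, abs_mul, abs_two]
      have h1 : |Real.sin ((a - b) / 2)| ≤ |(a - b) / 2| := Real.abs_sin_le_abs
      have h2 : |Real.cos ((a + b) / 2)| ≤ 1 := Real.abs_cos_le_one _
      nlinarith [abs_nonneg (Real.sin ((a - b) / 2)), abs_nonneg ((a - b) / 2),
        abs_nonneg (Real.cos ((a + b) / 2))]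
  _ = |a - b| := by rw [abs_div, abs_two]; ring

/-- ODE comparison with the explicit solution of `γ′ = −c·sin γ`. -/
theorem ode_comparison_sin (c ω₀ : ℝ) (hc : 0 < c) (hω₀ : ω₀ ∈ Set.Ioo 0 π)
    (ω ω' : ℝ → ℝ) (hω0 : ω 0 = ω₀)
    (hd : ∀ t, 0 ≤ t → HasDerivWithinAt ω (ω' t) (Set.Ici 0) t)
    (hineq : ∀ t, 0 ≤ t → ω' t ≤ -c * Real.sin (ω t)) :
    ∀ t, 0 ≤ t →
      ω t ≤ π - 2 * Real.arctan ((Real.cos (ω₀ / 2) / Real.sin (ω₀ / 2)) * Real.exp (c * t)) := by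
  obtain ⟨h0, hπ⟩ := hω₀
  set k : ℝ := Real.cos (ω₀ / 2) / Real.sin (ω₀ / 2) with hk_def
  have hhalf : ω₀ / 2 ∈ Set.Ioo 0 (π / 2) := ⟨by linarith, by linarith⟩
  have hsin : 0 < Real.sin (ω₀ / 2) :=
    Real.sin_pos_of_pos_of_lt_pi hhalf.1 (by linarith [Real.pi_pos])
  have hcos : 0 < Real.cos (ω₀ / 2) := Real.cos_pos_of_mem_Ioo ⟨by linarith [Real.pi_pos], hhalf.2⟩
  have hk : 0 < k := div_pos hcos hsin
  set B : ℝ → ℝ := fun x => π - 2 * Real.arctan (k * Real.exp (c * x)) with hB_def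
  -- B 0 = ω₀
  have hB0 : B 0 = ω₀ := by
    have : k = Real.tan (π / 2 - ω₀ / 2) := by
      rw [Real.tan_pi_div_two_sub, Real.tan_eq_sin_div_cos, hk_def, inv_div]
    simp only [hB_def, mul_zero, Real.exp_zero, mul_one]
    rw [this, Real.arctan_tan (by linarith [Real.pi_pos]) (by linarith)]
    ring
  -- B satisfies B' = -c sin B
  have hBderiv : ∀ x : ℝ, HasDerivAt B (-c * Real.sin (B x)) x := by
    intro x
    set u : ℝ := k * Real.exp (c * x) with hu_def
    have hu : 0 < u := mul_pos hk (Real.exp_pos _)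
    have h1 : HasDerivAt (fun x : ℝ => k * Real.exp (c * x)) (k * (Real.exp (c * x) * c)) x := by
      have h := (((hasDerivAt_id x).const_mul c).exp).const_mul k
      simp only [id_eq, mul_one] at h
      exact h
    have h2 : HasDerivAt (fun x : ℝ => Real.arctan (k * Real.exp (c * x)))
        (1 / (1 + u ^ 2) * (k * (Real.exp (c * x) * c))) x := by
      rw [hu_def]; exact (Real.hasDerivAt_arctan _).comp x h1
    have h3 : HasDerivAt B (-(2 * (1 / (1 + u ^ 2) * (k * (Real.exp (c * x) * c))))) x :=
      (h2.const_mul 2).const_sub π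
    convert h3 using 1
    have hsq : (0:ℝ) < 1 + u ^ 2 := by positivity
    have hsinB : Real.sin (B x) = 2 * u / (1 + u ^ 2) := by
      have : B x = π - 2 * Real.arctan u := rfl
      rw [this, Real.sin_pi_sub, two_mul, Real.sin_add, Real.sin_arctan, Real.cos_arctan]
      have hs : Real.sqrt (1 + u ^ 2) ^ 2 = 1 + u ^ 2 := Real.sq_sqrt hsq.le
      have hspos : 0 < Real.sqrt (1 + u ^ 2) := Real.sqrt_pos.2 hsq
      field_simp
      ring_nf
      linarith [hs]
    have hku : k * (Real.exp (c * x) * c) = u * c := by rw [hu_def]; ring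
    rw [hsinB, hku]
    ring
  -- main comparison
  intro t ht
  have key : ∀ ε : ℝ, 0 < ε → ω t ≤ B t + ε * Real.exp ((c + 1) * t) := by
    intro ε hε
    set Bε : ℝ → ℝ := fun x => B x + ε * Real.exp ((c + 1) * x) with hBε_def
    have hBεderiv : ∀ x : ℝ,
        HasDerivAt Bε (-c * Real.sin (B x) + ε * (Real.exp ((c + 1) * x) * (c + 1))) x := by
      intro x
      have h := (((hasDerivAt_id x).const_mul (c + 1)).exp).const_mul ε
      simp only [id_eq, mul_one] at h
      exact (hBderiv x).add h
    have hf : ContinuousOn ω (Set.Icc 0 t) := by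
      intro s hs
      exact ((hd s hs.1).continuousWithinAt).mono (fun y hy => hy.1)
    have hf' : ∀ x ∈ Set.Ico 0 t, HasDerivWithinAt ω (ω' x) (Set.Ici x) x := by
      intro x hx
      exact (hd x hx.1).mono (Set.Ici_subset_Ici.2 hx.1)
    have ha : ω 0 ≤ Bε 0 := by
      simp only [hBε_def, mul_zero, Real.exp_zero, mul_one, hω0, hB0]
      nlinarith
    have bound : ∀ x ∈ Set.Ico 0 t, ω x = Bε x →
        ω' x < -c * Real.sin (B x) + ε * (Real.exp ((c + 1) * x) * (c + 1)) := by
      intro x hx heq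
      have hδ : 0 < ε * Real.exp ((c + 1) * x) := by positivity
      have h1 : ω' x ≤ -c * Real.sin (ω x) := hineq x hx.1
      have h2 : Real.sin (B x) - Real.sin (ω x) ≤ ε * Real.exp ((c + 1) * x) := by
        have := sin_lip (B x) (ω x)
        have habs : |B x - ω x| = ε * Real.exp ((c + 1) * x) := by
          rw [heq]; simp [hBε_def, abs_of_pos hδ]
        linarith
      nlinarith
    have := image_le_of_deriv_right_lt_deriv_boundary hf hf' ha hBεderiv bound
      (Set.right_mem_Icc.2 ht)
    exact this
  have : ∀ ε : ℝ, 0 < ε → ω t ≤ B t + ε := by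
    intro ε hε
    have h := key (ε / Real.exp ((c + 1) * t)) (by positivity)
    rw [div_mul_cancel₀ _ (Real.exp_ne_zero _)] at h
    exact h
  exact le_of_forall_pos_le_add this
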